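/- Exchange argument for complete unweighted graphs: in a complete unweighted graph, if S and S' are two target sets of the same cardinality such that S' consists of vertices whose thresholds (as a multiset) pointwise dominate those of S (i.e., there is a bijection φ : S → S' with t(φ(v)) ≥ t(v) for all v ∈ S), then for every λ, |Influenced[S, λ]| ≤ |Influenced[S', λ]|. In particular, among all sets of size β, a set consisting of β vertices of highest thresholds maximizes |Influenced[S, λ]|. -/

import Mathlib

open scoped Classical

variable {V : Type*} [Fintype V] [DecidableEq V]

/-- The influence diffusion process on a complete unweighted graph:
`Influenced[S, τ] = S ∪ { v : t v ≤ |Influenced[S, τ-1]| }` for `τ ≥ 1`. -/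
noncomputable def influencedK (t : V → ℕ) (S : Finset V) : ℕ → Finset V
  | 0 => S
  | τ + 1 => S ∪ Finset.univ.filter (fun v => t v ≤ (influencedK t S τ).card)

/-- Exchange argument on complete unweighted graphs: if `φ` maps `S` bijectively onto
`S'` and pointwise does not decrease thresholds, then `S'` influences at least as many
vertices as `S` within any latency bound `λ`. -/
theorem exchange_argument (t : V → ℕ) (S S' : Finset V) (φ : V → V)
    (hbij : Set.BijOn φ ↑S ↑S') (hdom : ∀ v ∈ S, t v ≤ t (φ v)) (lam : ℕ) :
    (influencedK t S lam).card ≤ (influencedK t S' lam).card := by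
  have hcard : S.card = S'.card := by
    apply Finset.card_bij (fun a _ => φ a)
    · exact fun a ha => hbij.mapsTo ha
    · exact fun a ha b hb => hbij.injOn ha hb
    · intro b hb
      obtain ⟨a, ha, rfl⟩ := hbij.surjOn hb
      exact ⟨a, ha, rfl⟩
  induction lam with
  | zero => simpa [influencedK] using hcard.le
  | succ n ih =>
    simp only [influencedK]
    set c := (influencedK t S n).card with hc
    set c' := (influencedK t S' n).card with hc'
    set F := Finset.univ.filter (fun v => t v ≤ c) with hF
    set F' := Finset.univ.filter (fun v => t v ≤ c') with hF'
    have hFF' : F ⊆ F' := by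
      intro v hv
      simp only [hF, hF', Finset.mem_filter] at hv ⊢
      exact ⟨hv.1, le_trans hv.2 ih⟩
    -- decompose
    have h1 : (S ∪ F).card = (S \ F).card + F.card := by
      rw [← Finset.card_sdiff_add_card]
    have h2 : (S' ∪ F').card = (S' \ F').card + F'.card := by
      rw [← Finset.card_sdiff_add_card]
    set A := (S \ F).filter (fun v => t v ≤ c') with hA
    set B := (S \ F).filter (fun v => ¬ t v ≤ c') with hB
    have hAB : A.card + B.card = (S \ F).card := Finset.card_filter_add_card_filter_not _
    have hA_sub : A ⊆ F' \ F := by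
      intro v hv
      simp only [hA, Finset.mem_filter, Finset.mem_sdiff, hF, hF', Finset.mem_univ,
        true_and] at hv ⊢
      exact ⟨hv.2, fun h => hv.1.2 (by simpa [hF, Finset.mem_filter] using h)⟩
    have hB_le : B.card ≤ (S' \ F').card := by
      apply Finset.card_le_card_of_injOn φ
      · intro v hv
        simp only [hB, Finset.mem_coe, Finset.mem_filter, Finset.mem_sdiff] at hv
        have hvS : v ∈ S := hv.1.1
        have : ¬ t (φ v) ≤ c' := fun h => hv.2 (le_trans (hdom v hvS) h)
        simp only [Finset.mem_coe, Finset.mem_sdiff, hF', Finset.mem_filter, Finset.mem_univ, true_and]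
        exact ⟨hbij.mapsTo hvS, this⟩
      · intro a ha b hb
        have haS : a ∈ S := (Finset.mem_sdiff.mp (Finset.mem_filter.mp ha).1).1
        have hbS : b ∈ S := (Finset.mem_sdiff.mp (Finset.mem_filter.mp hb).1).1
        exact hbij.injOn haS hbS
    have hF'card : F'.card = F.card + (F' \ F).card := by
      rw [add_comm, Finset.card_sdiff_add_card_eq_card hFF']
    calc (S ∪ F).card = A.card + B.card + F.card := by rw [h1, hAB]
      _ ≤ (F' \ F).card + (S' \ F').card + F.card := by
          exact Nat.add_le_add_right (Nat.add_le_add (Finset.card_le_card hA_sub) hB_le) _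
      _ = (S' \ F').card + F'.card := by rw [hF'card]; ring
      _ = (S' ∪ F').card := h2.symm
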